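/- For a tree T on n ≥ 2 vertices, any eigenvector Φ of the graph Laplacian L(T) corresponding to the second smallest eigenvalue (the algebraic connectivity) attains both its maximum and its minimum value at leaves (pendant vertices) of T. -/

import Mathlib

open Matrix Finset

namespace Stmt12Aux

variable {V : Type*} [Fintype V] [DecidableEq V]

/-- The graph `G` with all edges incident to `v` removed. -/
def delVert (G : SimpleGraph V) (v : V) : SimpleGraph V where
  Adj a b := G.Adj a b ∧ a ≠ v ∧ b ≠ v
  symm := ⟨fun a b ⟨h, ha, hb⟩ => ⟨h.symm, hb, ha⟩⟩
  loopless := ⟨fun a ⟨h, _, _⟩ => G.irrefl h⟩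

lemma delVert_reach_from {G : SimpleGraph V} {v y : V}
    (h : (delVert G v).Reachable v y) : v = y := by
  obtain ⟨p⟩ := h
  cases p with
  | nil => rfl
  | cons h p => exact absurd rfl h.2.1

variable (G : SimpleGraph V) [DecidableRel G.Adj]

lemma sum_lapMatrix_mulVec (x : V → ℝ) : ∑ y, (G.lapMatrix ℝ *ᵥ x) y = 0 := by
  have hs : (G.lapMatrix ℝ)ᵀ = G.lapMatrix ℝ := G.isSymm_lapMatrix (R := ℝ)
  have hrow : ∀ u : V, ∑ y, G.lapMatrix ℝ u y = 0 := by
    intro u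
    have := congrFun (G.lapMatrix_mulVec_const_eq_zero (R := ℝ)) u
    simpa [mulVec, dotProduct] using this
  calc ∑ y, (G.lapMatrix ℝ *ᵥ x) y = ∑ y, ∑ u, G.lapMatrix ℝ y u * x u := rfl
    _ = ∑ u, (∑ y, G.lapMatrix ℝ y u) * x u := by
        rw [Finset.sum_comm]
        exact Finset.sum_congr rfl fun u _ => (Finset.sum_mul _ _ _).symm
    _ = 0 := by
        refine Finset.sum_eq_zero fun u _ => ?_
        have : ∑ y, G.lapMatrix ℝ y u = ∑ y, G.lapMatrix ℝ u y := by
          refine Finset.sum_congr rfl fun y _ => ?_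
          conv_lhs => rw [← hs]
          rfl
        rw [this, hrow, zero_mul]

lemma const_of_mulVec_zero (hc : G.Connected) (x : V → ℝ)
    (h : G.lapMatrix ℝ *ᵥ x = 0) : ∀ a b : V, x a = x b := by
  intro a b
  have := (G.lapMatrix_mulVec_eq_zero_iff_forall_reachable).mp h
  exact this a b (hc.preconnected a b)


lemma rayleigh (hc : G.Connected) {μ : ℝ}
    (hμ : IsLeast {μ' : ℝ | ∃ ψ : V → ℝ, ψ ≠ 0 ∧ (∑ v, ψ v) = 0 ∧
        Matrix.mulVec (G.lapMatrix ℝ) ψ = μ' • ψ} μ)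
    (ψ : V → ℝ) (hsum : ∑ v, ψ v = 0) :
    μ * (ψ ⬝ᵥ ψ) ≤ ψ ⬝ᵥ (G.lapMatrix ℝ *ᵥ ψ) := by
  have hnV : Nonempty V := hc.nonempty
  set A := G.lapMatrix ℝ with hA_def
  have hA : A.IsHermitian := (SimpleGraph.posSemidef_lapMatrix ℝ G).1
  set U : Matrix V V ℝ := (hA.eigenvectorUnitary : Matrix V V ℝ) with hU_def
  set lam : V → ℝ := hA.eigenvalues with hlam_def
  have hUU : U * star U = 1 := (Matrix.mem_unitaryGroup_iff).mp hA.eigenvectorUnitary.2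
  have hspec : A = U * Matrix.diagonal lam * star U := by
    have := hA.spectral_theorem
    simpa [Function.comp] using this
  set c : V → ℝ := star U *ᵥ ψ with hc_def
  have hvU : ψ ᵥ* U = c := by
    ext i
    rw [hc_def]
    simp [Matrix.vecMul, Matrix.mulVec, dotProduct, Matrix.star_apply, mul_comm]
  have hdotA : ψ ⬝ᵥ (A *ᵥ ψ) = ∑ i, lam i * c i ^ 2 := by
    rw [hspec]
    rw [← Matrix.mulVec_mulVec, ← Matrix.mulVec_mulVec]
    rw [Matrix.dotProduct_mulVec (A := U), hvU]
    simp [Matrix.mulVec_diagonal, dotProduct, mul_comm, pow_two, mul_assoc, mul_left_comm]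
    rfl
  have hdotself : ψ ⬝ᵥ ψ = ∑ i, c i ^ 2 := by
    have hψ : U *ᵥ c = ψ := by
      rw [hc_def, Matrix.mulVec_mulVec, hUU, Matrix.one_mulVec]
    calc ψ ⬝ᵥ ψ = ψ ⬝ᵥ (U *ᵥ c) := by rw [hψ]
      _ = (ψ ᵥ* U) ⬝ᵥ c := (Matrix.dotProduct_mulVec _ _ _)
      _ = c ⬝ᵥ c := by rw [hvU]
      _ = ∑ i, c i ^ 2 := by simp [dotProduct, pow_two]
  have hkey : ∀ i, μ * c i ^ 2 ≤ lam i * c i ^ 2 := by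
    intro i
    rcases le_or_gt μ (lam i) with h | h
    · exact mul_le_mul_of_nonneg_right h (sq_nonneg _)
    · set u : V → ℝ := ⇑(hA.eigenvectorBasis i) with hu_def
      have heigu : A *ᵥ u = lam i • u := hA.mulVec_eigenvectorBasis i
      have hci : c i = ∑ x, u x * ψ x := by
        rw [hc_def]
        simp only [Matrix.mulVec, dotProduct, Matrix.star_apply, star_trivial]
        exact Finset.sum_congr rfl fun x _ => rfl
      have hune : u ≠ 0 := by
        intro h0
        have h1 : ‖hA.eigenvectorBasis i‖ = 1 := hA.eigenvectorBasis.orthonormal.1 i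
        rw [show hA.eigenvectorBasis i = 0 from PiLp.ext fun x => congrFun h0 x] at h1
        simp at h1
      rcases eq_or_ne (∑ x, u x) 0 with hs0 | hs0
      · exact absurd (hμ.2 ⟨u, hune, hs0, heigu⟩) (not_le.mpr h)
      · have hsum0 : lam i * ∑ x, u x = 0 := by
          have h1 := sum_lapMatrix_mulVec G u
          rw [← hA_def, heigu] at h1
          simpa [Finset.mul_sum] using h1
        have hlam0 : lam i = 0 := by
          rcases mul_eq_zero.mp hsum0 with h' | h'
          · exact h'
          · exact absurd h' hs0
        have hu0 : A *ᵥ u = 0 := by rw [heigu, hlam0, zero_smul]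
        have hconst := const_of_mulVec_zero G hc u (hA_def ▸ hu0)
        obtain ⟨x₀⟩ := hnV
        have hci0 : c i = 0 := by
          rw [hci]
          calc ∑ x, u x * ψ x = ∑ x, u x₀ * ψ x :=
                Finset.sum_congr rfl fun x _ => by rw [hconst x x₀]
            _ = u x₀ * ∑ x, ψ x := by rw [Finset.mul_sum]
            _ = 0 := by rw [hsum, mul_zero]
        rw [hci0]
        simp
  calc μ * (ψ ⬝ᵥ ψ) = ∑ i, μ * c i ^ 2 := by rw [hdotself, Finset.mul_sum]
    _ ≤ ∑ i, lam i * c i ^ 2 := Finset.sum_le_sum fun i _ => hkey i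
    _ = ψ ⬝ᵥ (A *ᵥ ψ) := hdotA.symm


lemma leaf_of_max (hT : G.IsTree) (hcard : 2 ≤ Fintype.card V) {μ : ℝ}
    (hμ : IsLeast {μ' : ℝ | ∃ ψ : V → ℝ, ψ ≠ 0 ∧ (∑ v, ψ v) = 0 ∧
        Matrix.mulVec (G.lapMatrix ℝ) ψ = μ' • ψ} μ)
    (hμpos : 0 < μ)
    (Φ : V → ℝ) (heig : Matrix.mulVec (G.lapMatrix ℝ) Φ = μ • Φ)
    (v : V) (hmax : ∀ w, Φ w ≤ Φ v) (hMpos : 0 < Φ v) :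
    G.degree v = 1 := by
  classical
  set M := Φ v with hM
  have hconn := hT.isConnected
  set A := G.lapMatrix ℝ with hA_def
  have heig' : ∀ y, (G.degree y : ℝ) * Φ y - ∑ z ∈ G.neighborFinset y, Φ z = μ * Φ y := by
    intro y
    have h1 := congrFun heig y
    rw [G.lapMatrix_mulVec_apply] at h1
    simpa using h1
  -- v has a neighbor
  have hdeg1 : ∃ w, G.Adj v w := by
    obtain ⟨u, hu⟩ := Fintype.exists_ne_of_one_lt_card (by omega) v
    obtain ⟨p⟩ := hconn.preconnected v u
    cases p with
    | nil => exact absurd rfl hu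
    | cons h _ => exact ⟨_, h⟩
  by_contra hdeg
  have h2 : 1 < (G.neighborFinset v).card := by
    obtain ⟨w, hw⟩ := hdeg1
    have hpos : 0 < (G.neighborFinset v).card :=
      Finset.card_pos.mpr ⟨w, by simpa [SimpleGraph.mem_neighborFinset] using hw⟩
    have hne : (G.neighborFinset v).card ≠ 1 := hdeg
    omega
  obtain ⟨w₁, hmw₁, w₂, hmw₂, hww⟩ := Finset.one_lt_card.mp h2
  rw [SimpleGraph.mem_neighborFinset] at hmw₁ hmw₂
  set G' := delVert G v with hG'
  -- basic branch facts
  have hmem_ne : ∀ {w y : V}, G.Adj v w → G'.Reachable w y → y ≠ v := by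
    intro w y hw hr heq
    subst heq
    exact (G.ne_of_adj hw) (delVert_reach_from hr.symm)
  have hclose : ∀ {w y z : V}, G.Adj v w → G'.Reachable w y → G.Adj y z →
      z = v ∨ G'.Reachable w z := by
    intro w y z hw hr hyz
    by_cases hz : z = v
    · exact Or.inl hz
    · exact Or.inr (hr.trans (SimpleGraph.Adj.reachable ⟨hyz, hmem_ne hw hr, hz⟩))
  -- disjointness of the two branches
  have hdisj : ∀ y, G'.Reachable w₁ y → G'.Reachable w₂ y → False := by
    intro y h1 h2
    have h12 : G'.Reachable w₂ w₁ := h2.trans h1.symm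
    have hbr := (SimpleGraph.isAcyclic_iff_forall_adj_isBridge.mp hT.IsAcyclic) hmw₁
    rw [SimpleGraph.isBridge_iff] at hbr
    apply hbr
    have hle : G' ≤ G \ SimpleGraph.fromEdgeSet {s(v, w₁)} := by
      intro a b hab
      rw [SimpleGraph.sdiff_adj]
      refine ⟨hab.1, ?_⟩
      rw [SimpleGraph.fromEdgeSet_adj]
      rintro ⟨he, -⟩
      rw [Set.mem_singleton_iff, Sym2.eq_iff] at he
      rcases he with ⟨ha, hb⟩ | ⟨ha, hb⟩
      · exact hab.2.1 ha
      · exact hab.2.2 hb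
    have hadj2 : (G \ SimpleGraph.fromEdgeSet {s(v, w₁)}).Adj v w₂ := by
      rw [SimpleGraph.sdiff_adj]
      refine ⟨hmw₂, ?_⟩
      rw [SimpleGraph.fromEdgeSet_adj]
      rintro ⟨he, -⟩
      rw [Set.mem_singleton_iff] at he
      exact hww (Sym2.congr_right.mp he).symm
    exact hadj2.reachable.trans (h12.mono hle)
  -- the test vectors
  set ξ₁ : V → ℝ := fun y => if G'.Reachable w₁ y then M - Φ y else 0 with hξ₁
  set ξ₂ : V → ℝ := fun y => if G'.Reachable w₂ y then M - Φ y else 0 with hξ₂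
  -- pointwise eigen-type identity on a branch
  have claimA : ∀ (w : V), G.Adj v w → ∀ y, G'.Reachable w y →
      (A *ᵥ fun z => if G'.Reachable w z then M - Φ z else 0) y
        = μ * (M - Φ y) - μ * M := by
    intro w hw y hr
    rw [hA_def, G.lapMatrix_mulVec_apply]
    have hval : ∀ z ∈ G.neighborFinset y, (if G'.Reachable w z then M - Φ z else 0) = M - Φ z := by
      intro z hz
      rw [SimpleGraph.mem_neighborFinset] at hz
      rcases hclose hw hr hz with rfl | hzr
      · rw [if_neg (fun h => hmem_ne hw h rfl), hM, sub_self]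
      · rw [if_pos hzr]
    rw [if_pos hr, Finset.sum_congr rfl hval, Finset.sum_sub_distrib, Finset.sum_const,
      SimpleGraph.card_neighborFinset_eq_degree]
    have hsN : ∑ z ∈ G.neighborFinset y, Φ z = (G.degree y : ℝ) * Φ y - μ * Φ y := by
      linarith [heig' y]
    rw [hsN]
    push_cast
    ring
  -- each branch has a vertex with strictly smaller value
  have claimB : ∀ (w : V), G.Adj v w → ∃ y, G'.Reachable w y ∧ Φ y < M := by
    intro w hw
    by_contra hcon
    push_neg at hcon
    have hall : ∀ y, G'.Reachable w y → Φ y = M := fun y hy =>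
      le_antisymm (hmax y) (hcon y hy)
    have hNw : ∀ z ∈ G.neighborFinset w, Φ z = M := by
      intro z hz
      rw [SimpleGraph.mem_neighborFinset] at hz
      rcases hclose hw (SimpleGraph.Reachable.refl w) hz with rfl | hzr
      · rfl
      · exact hall z hzr
    have hΦw : Φ w = M := hall w (SimpleGraph.Reachable.refl w)
    have h1 := heig' w
    rw [Finset.sum_congr rfl hNw, Finset.sum_const, SimpleGraph.card_neighborFinset_eq_degree,
      hΦw] at h1
    have : μ * M = 0 := by
      simpa [nsmul_eq_mul] using h1.symm
    exact absurd this (mul_pos hμpos hMpos).ne'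
  -- set up sums
  obtain ⟨y₁, hy₁r, hy₁lt⟩ := claimB w₁ hmw₁
  obtain ⟨y₂, hy₂r, hy₂lt⟩ := claimB w₂ hmw₂
  have hξ₁nonneg : ∀ y, 0 ≤ ξ₁ y := by
    intro y; rw [hξ₁]; dsimp only
    split
    · linarith [hmax y]
    · exact le_rfl
  have hξ₂nonneg : ∀ y, 0 ≤ ξ₂ y := by
    intro y; rw [hξ₂]; dsimp only
    split
    · linarith [hmax y]
    · exact le_rfl
  set s₁ : ℝ := ∑ y, ξ₁ y with hs₁def
  set s₂ : ℝ := ∑ y, ξ₂ y with hs₂def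
  set X₁ : ℝ := ∑ y, ξ₁ y * ξ₁ y with hX₁def
  set X₂ : ℝ := ∑ y, ξ₂ y * ξ₂ y with hX₂def
  have hs₁pos : 0 < s₁ := by
    refine Finset.sum_pos' (fun y _ => hξ₁nonneg y) ⟨y₁, Finset.mem_univ _, ?_⟩
    rw [hξ₁]; dsimp only; rw [if_pos hy₁r]; linarith
  have hs₂pos : 0 < s₂ := by
    refine Finset.sum_pos' (fun y _ => hξ₂nonneg y) ⟨y₂, Finset.mem_univ _, ?_⟩
    rw [hξ₂]; dsimp only; rw [if_pos hy₂r]; linarith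
  -- quadratic form identities
  have hq₁ : ∀ y, ξ₁ y * (A *ᵥ ξ₁) y = μ * (ξ₁ y * ξ₁ y) - μ * M * ξ₁ y := by
    intro y
    by_cases h : G'.Reachable w₁ y
    · have := claimA w₁ hmw₁ y h
      rw [show (A *ᵥ ξ₁) y = μ * (M - Φ y) - μ * M from this]
      have hv : ξ₁ y = M - Φ y := if_pos h
      rw [hv]; ring
    · have hv : ξ₁ y = 0 := if_neg h
      rw [hv]; ring
  have hq₂ : ∀ y, ξ₂ y * (A *ᵥ ξ₂) y = μ * (ξ₂ y * ξ₂ y) - μ * M * ξ₂ y := by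
    intro y
    by_cases h : G'.Reachable w₂ y
    · have := claimA w₂ hmw₂ y h
      rw [show (A *ᵥ ξ₂) y = μ * (M - Φ y) - μ * M from this]
      have hv : ξ₂ y = M - Φ y := if_pos h
      rw [hv]; ring
    · have hv : ξ₂ y = 0 := if_neg h
      rw [hv]; ring
  -- cross terms vanish
  have hcrossgen : ∀ (wa wb : V), G.Adj v wa → G.Adj v wb →
      (∀ y, G'.Reachable wa y → G'.Reachable wb y → False) →
      ∀ y, (if G'.Reachable wa y then M - Φ y else 0) *
        (A *ᵥ fun z => if G'.Reachable wb z then M - Φ z else 0) y = 0 := by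
    intro wa wb hwa hwb hd y
    by_cases hy : G'.Reachable wa y
    · rw [hA_def, G.lapMatrix_mulVec_apply]
      have h1 : (if G'.Reachable wb y then M - Φ y else 0) = 0 :=
        if_neg (fun h => hd y hy h)
      have h2 : ∀ z ∈ G.neighborFinset y,
          (if G'.Reachable wb z then M - Φ z else 0) = 0 := by
        intro z hz
        rw [SimpleGraph.mem_neighborFinset] at hz
        rcases hclose hwa hy hz with rfl | hzr
        · exact if_neg (fun h => hmem_ne hwb h rfl)
        · exact if_neg (fun h => hd z hzr h)
      rw [h1, Finset.sum_eq_zero h2]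
      ring
    · rw [if_neg hy, zero_mul]
  have hc12 : ∀ y, ξ₁ y * (A *ᵥ ξ₂) y = 0 :=
    hcrossgen w₁ w₂ hmw₁ hmw₂ hdisj
  have hc21 : ∀ y, ξ₂ y * (A *ᵥ ξ₁) y = 0 :=
    hcrossgen w₂ w₁ hmw₂ hmw₁ (fun y h2 h1 => hdisj y h1 h2)
  have hprod : ∀ y, ξ₁ y * ξ₂ y = 0 := by
    intro y
    by_cases h : G'.Reachable w₁ y
    · have : ξ₂ y = 0 := if_neg (fun h2 => hdisj y h h2)
      rw [this, mul_zero]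
    · have : ξ₁ y = 0 := if_neg h
      rw [this, zero_mul]
  -- the test vector
  set ψ : V → ℝ := fun y => s₂ * ξ₁ y - s₁ * ξ₂ y with hψdef
  have hψsum : ∑ y, ψ y = 0 := by
    rw [hψdef]
    simp only [Finset.sum_sub_distrib, ← Finset.mul_sum, ← hs₁def, ← hs₂def]
    ring
  have hAψ : ∀ y, (A *ᵥ ψ) y = s₂ * (A *ᵥ ξ₁) y - s₁ * (A *ᵥ ξ₂) y := by
    intro y
    show ∑ u, A y u * ψ u = _
    rw [hψdef]
    simp only [Matrix.mulVec, dotProduct, Finset.mul_sum, ← Finset.sum_sub_distrib]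
    exact Finset.sum_congr rfl fun u _ => by ring
  have hptA : ∀ y, ψ y * (A *ᵥ ψ) y =
      s₂ * s₂ * (μ * (ξ₁ y * ξ₁ y) - μ * M * ξ₁ y)
        + s₁ * s₁ * (μ * (ξ₂ y * ξ₂ y) - μ * M * ξ₂ y) := by
    intro y
    rw [hAψ y, ← hq₁ y, ← hq₂ y]
    have e12 := hc12 y
    have e21 := hc21 y
    show (s₂ * ξ₁ y - s₁ * ξ₂ y) * _ = _
    linear_combination (-(s₂ * s₁)) * e12 + (-(s₁ * s₂)) * e21
  have hptS : ∀ y, ψ y * ψ y = s₂ * s₂ * (ξ₁ y * ξ₁ y) + s₁ * s₁ * (ξ₂ y * ξ₂ y) := by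
    intro y
    have hz := hprod y
    show (s₂ * ξ₁ y - s₁ * ξ₂ y) * (s₂ * ξ₁ y - s₁ * ξ₂ y) = _
    linear_combination (-(2 * s₁ * s₂)) * hz
  have SA : ∑ y, ψ y * (A *ᵥ ψ) y =
      μ * (s₂ * s₂ * X₁ + s₁ * s₁ * X₂) - μ * M * (s₂ * s₂ * s₁ + s₁ * s₁ * s₂) := by
    rw [Finset.sum_congr rfl (fun y _ => hptA y)]
    simp only [Finset.sum_add_distrib, Finset.sum_sub_distrib, ← Finset.mul_sum,
      ← hs₁def, ← hs₂def, ← hX₁def, ← hX₂def]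
    ring
  have SS : ∑ y, ψ y * ψ y = s₂ * s₂ * X₁ + s₁ * s₁ * X₂ := by
    rw [Finset.sum_congr rfl (fun y _ => hptS y)]
    simp only [Finset.sum_add_distrib, ← Finset.mul_sum, ← hX₁def, ← hX₂def]
  have hray := rayleigh G hconn hμ ψ hψsum
  have hray' : μ * (∑ y, ψ y * ψ y) ≤ ∑ y, ψ y * (A *ᵥ ψ) y := hray
  rw [SA, SS] at hray'
  have hposbit : 0 < μ * M * (s₂ * s₂ * s₁ + s₁ * s₁ * s₂) := by
    have h1 : 0 < s₂ * s₂ * s₁ := mul_pos (mul_pos hs₂pos hs₂pos) hs₁pos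
    have h2 : 0 < s₁ * s₁ * s₂ := mul_pos (mul_pos hs₁pos hs₁pos) hs₂pos
    have h3 : 0 < μ * M := mul_pos hμpos hMpos
    nlinarith
  linarith

end Stmt12Aux

open Stmt12Aux in
theorem stmt_12 {V : Type*} [Fintype V] [DecidableEq V]
    (G : SimpleGraph V) [DecidableRel G.Adj] (hT : G.IsTree)
    (hcard : 2 ≤ Fintype.card V)
    (μ : ℝ)
    (hμ : IsLeast {μ' : ℝ | ∃ ψ : V → ℝ, ψ ≠ 0 ∧ (∑ v, ψ v) = 0 ∧
        Matrix.mulVec (G.lapMatrix ℝ) ψ = μ' • ψ} μ)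
    (Φ : V → ℝ) (hΦ : Φ ≠ 0) (heig : Matrix.mulVec (G.lapMatrix ℝ) Φ = μ • Φ) :
    (∃ u : V, G.degree u = 1 ∧ ∀ w : V, Φ w ≤ Φ u) ∧
      (∃ u : V, G.degree u = 1 ∧ ∀ w : V, Φ u ≤ Φ w) := by
  classical
  have hconn := hT.isConnected
  obtain ⟨ψ₀, hψ₀ne, hψ₀sum, hψ₀eig⟩ := hμ.1
  have hψ₀pos : 0 < ψ₀ ⬝ᵥ ψ₀ := by
    obtain ⟨y, hy⟩ := Function.ne_iff.mp hψ₀ne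
    refine Finset.sum_pos' (fun x _ => mul_self_nonneg _) ⟨y, Finset.mem_univ _, ?_⟩
    exact mul_self_pos.mpr (by simpa using hy)
  have hq : μ * (ψ₀ ⬝ᵥ ψ₀) = ψ₀ ⬝ᵥ (G.lapMatrix ℝ *ᵥ ψ₀) := by
    rw [hψ₀eig]
    simp [dotProduct, Finset.mul_sum, mul_assoc, mul_left_comm]
  have hq0 : 0 ≤ ψ₀ ⬝ᵥ (G.lapMatrix ℝ *ᵥ ψ₀) := by
    have := (SimpleGraph.posSemidef_lapMatrix ℝ G).dotProduct_mulVec_nonneg ψ₀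
    simpa using this
  have hμnn : 0 ≤ μ := by
    by_contra h
    push_neg at h
    nlinarith
  have hμpos : 0 < μ := by
    rcases hμnn.lt_or_eq with h | h
    · exact h
    · exfalso
      have h0 : G.lapMatrix ℝ *ᵥ ψ₀ = 0 := by rw [hψ₀eig, ← h, zero_smul]
      have hconst := const_of_mulVec_zero G hconn ψ₀ h0
      obtain ⟨x₀⟩ : Nonempty V := hconn.nonempty
      have hcc : ∀ x, ψ₀ x = ψ₀ x₀ := fun x => hconst x x₀
      have hsum' : (Fintype.card V : ℝ) * ψ₀ x₀ = 0 := by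
        calc (Fintype.card V : ℝ) * ψ₀ x₀ = ∑ _x : V, ψ₀ x₀ := by
              rw [Finset.sum_const, nsmul_eq_mul, Finset.card_univ]
          _ = ∑ x, ψ₀ x := Finset.sum_congr rfl fun x _ => (hcc x).symm
          _ = 0 := hψ₀sum
      have hcard0 : (0:ℝ) < (Fintype.card V : ℝ) := by
        exact_mod_cast (by omega : 0 < Fintype.card V)
      have hx0 : ψ₀ x₀ = 0 := by
        rcases mul_eq_zero.mp hsum' with h' | h'
        · exact absurd h' hcard0.ne'
        · exact h'
      exact hψ₀ne (funext fun x => by simp [hcc x, hx0])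
  have hΦsum : ∑ x, Φ x = 0 := by
    have h1 := sum_lapMatrix_mulVec G Φ
    rw [heig] at h1
    have h2 : μ * ∑ x, Φ x = 0 := by simpa [Finset.mul_sum] using h1
    rcases mul_eq_zero.mp h2 with h | h
    · exact absurd h hμpos.ne'
    · exact h
  have hN : Nonempty V := hconn.nonempty
  have keymax : ∀ (Ψ : V → ℝ), Ψ ≠ 0 → (∑ x, Ψ x) = 0 →
      Matrix.mulVec (G.lapMatrix ℝ) Ψ = μ • Ψ →
      ∃ u, G.degree u = 1 ∧ ∀ w, Ψ w ≤ Ψ u := by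
    intro Ψ hne hsum heigΨ
    obtain ⟨u, hu⟩ := Finite.exists_max Ψ
    have hpos : 0 < Ψ u := by
      by_contra h
      push_neg at h
      have hall : ∀ x ∈ Finset.univ, Ψ x ≤ 0 := fun x _ => le_trans (hu x) h
      have hz := (Finset.sum_eq_zero_iff_of_nonpos hall).mp hsum
      exact hne (funext fun x => by simpa using hz x (Finset.mem_univ x))
    exact ⟨u, leaf_of_max G hT hcard hμ hμpos Ψ heigΨ u hu hpos, hu⟩
  constructor
  · exact keymax Φ hΦ hΦsum heig
  · obtain ⟨u, hdeg, hmax⟩ := keymax (-Φ) (neg_ne_zero.mpr hΦ)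
      (by simp [hΦsum])
      (by rw [Matrix.mulVec_neg, heig, smul_neg])
    exact ⟨u, hdeg, fun w => by have := hmax w; simpa using this⟩
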